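/- Let ℓ ≥ 2 be an integer and let L > ℓ be a real number. If a path P = v0v1…vℓ in a graph G is L-admissible but not L-good, then there exist at least L pairwise internally vertex-disjoint paths of length ℓ from v0 to vℓ in G. -/

import Mathlib

open SimpleGraph

variable {V : Type*} [Fintype V] [DecidableEq V]

/-- The restriction of `p : ℕ → V` to `[0, ℓ]` is a path in `G`: consecutive vertices are
adjacent and all vertices `p 0, …, p ℓ` are distinct. -/
def PathSeq (G : SimpleGraph V) (ℓ : ℕ) (p : ℕ → V) : Prop :=
  (∀ i, i < ℓ → G.Adj (p i) (p (i + 1))) ∧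
  ∀ i j, i < j → j ≤ ℓ → p i ≠ p j

/-- `p` is padded beyond index `ℓ`; used so that each finite sequence corresponds to a
unique function `ℕ → V` when counting. -/
def PadSeq (ℓ : ℕ) (p : ℕ → V) : Prop := ∀ i, ℓ ≤ i → p i = p ℓ

/-- `f(ℓ, L) = L^(5^ℓ)`. -/
noncomputable def fBound (ℓ : ℕ) (L : ℝ) : ℝ := L ^ (5 ^ ℓ)

/-- The recursive notion of an `L`-good path of length `ℓ` (as a sequence `p 0, …, p ℓ`):
`p` is a path, every proper subpath is `L`-good, and the number of `L`-admissible paths of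
length `ℓ` from `p 0` to `p ℓ` is at most `f(ℓ, L)`. -/
def Good (G : SimpleGraph V) (L : ℝ) (ℓ : ℕ) (p : ℕ → V) : Prop :=
  (PathSeq G ℓ p ∧
    ∀ i j, i < j → j ≤ ℓ → ¬(i = 0 ∧ j = ℓ) → Good G L (j - i) (fun a => p (i + a))) ∧
  (Set.ncard {q : ℕ → V | q 0 = p 0 ∧ q ℓ = p ℓ ∧ PadSeq ℓ q ∧ PathSeq G ℓ q ∧
      ∀ i j, i < j → j ≤ ℓ → ¬(i = 0 ∧ j = ℓ) → Good G L (j - i) (fun a => q (i + a))} : ℝ)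
    ≤ fBound ℓ L
termination_by ℓ
decreasing_by all_goals omega

/-- `L`-admissible: a path all of whose proper subpaths are `L`-good. -/
def Admissible (G : SimpleGraph V) (L : ℝ) (ℓ : ℕ) (p : ℕ → V) : Prop :=
  PathSeq G ℓ p ∧
    ∀ i j, i < j → j ≤ ℓ → ¬(i = 0 ∧ j = ℓ) → Good G L (j - i) (fun a => p (i + a))

/-- There exist `N` pairwise internally vertex-disjoint paths of length `m` from `x` to `y`. -/
def ManyDisjointPaths (G : SimpleGraph V) (m : ℕ) (x y : V) (N : ℕ) : Prop :=
  ∃ P : Fin N → (ℕ → V),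
    (∀ a, PathSeq G m (P a) ∧ P a 0 = x ∧ P a m = y) ∧
    (∀ a b, a ≠ b → ∃ i, i ≤ m ∧ P a i ≠ P b i) ∧
    ∀ a b, a ≠ b → ∀ i j, 0 < i → i < m → 0 < j → j < m → P a i ≠ P b j

/-- A pair `(x, y)` of distinct vertices is `(i,j)`-rich (with parameters `k`, `h`, `K`, `δ`). -/
def Rich (G : SimpleGraph V) (k h : ℕ) (K δ : ℝ) (i j : ℕ) (x y : V) : Prop :=
  x ≠ y ∧
  ((2 * (i + j) * h * (2 * k + 1) + 2 * (i + 1) * j : ℕ) : ℝ) *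
      (K * δ) ^ ((i : ℤ) + (j : ℤ) - 1) <
    (Set.ncard {PQ : (ℕ → V) × (ℕ → V) |
      PathSeq G i PQ.1 ∧ PQ.1 0 = x ∧ PadSeq i PQ.1 ∧
      PathSeq G j PQ.2 ∧ PQ.2 0 = y ∧ PadSeq j PQ.2 ∧
      ManyDisjointPaths G (2 * k - i - j) (PQ.1 i) (PQ.2 j) ((h + 2) * (2 * k + 1) + 1)} : ℝ)

/-- `(x, y)` is an `(ℓ, L)`-bad pair: there is an `L`-admissible but not `L`-good path of
length `ℓ` from `x` to `y`. -/
def Bad (G : SimpleGraph V) (L : ℝ) (ℓ : ℕ) (x y : V) : Prop :=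
  ∃ p : ℕ → V, p 0 = x ∧ p ℓ = y ∧ Admissible G L ℓ p ∧ ¬ Good G L ℓ p

/-- `G` contains the `(s-1)`-subdivision of the multigraph on `Fin t` with multiplicity
function `m` as a subgraph: each parallel edge between `a < b` is replaced by a path of
length `s`, these paths being pairwise internally vertex-disjoint, with internal vertices
distinct from all branch vertices. -/
def ContainsMultiSubdiv (G : SimpleGraph V) (t : ℕ) (m : Fin t → Fin t → ℕ) (s : ℕ) : Prop :=
  ∃ (φ : Fin t → V) (π : (a : Fin t) → (b : Fin t) → Fin (m a b) → (ℕ → V)),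
    Function.Injective φ ∧
    (∀ a b, a < b → ∀ c, PathSeq G s (π a b c) ∧ π a b c 0 = φ a ∧ π a b c s = φ b) ∧
    (∀ a b, a < b → ∀ c, ∀ i, 0 < i → i < s → ∀ d, π a b c i ≠ φ d) ∧
    (∀ a b, a < b → ∀ a' b', a' < b' → ∀ (c : Fin (m a b)) (c' : Fin (m a' b')),
      (a, b, (c : ℕ)) ≠ (a', b', (c' : ℕ)) →
      ∀ i i', 0 < i → i < s → 0 < i' → i' < s → π a b c i ≠ π a' b' c' i')

/-- The number of vertices of `H = F^{2k-1}` where `F` is the multigraph on `Fin t` with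
multiplicity function `m`: the `t` branch vertices plus `2k - 1` internal vertices for each
edge (counted with multiplicity). -/
def nH (t k : ℕ) (m : Fin t → Fin t → ℕ) : ℕ :=
  t + (2 * k - 1) * ∑ p : Fin t × Fin t, if p.1 < p.2 then m p.1 p.2 else 0

/-- The minimum degree of `G`. -/
noncomputable def minDeg (G : SimpleGraph V) : ℕ :=
  sInf {d | ∃ v, (G.neighborSet v).ncard = d}

/-- The maximum degree of `G`. -/
noncomputable def maxDeg (G : SimpleGraph V) : ℕ :=
  sSup {d | ∃ v, (G.neighborSet v).ncard = d}

/-- Adjacency in the auxiliary graph `𝒢_ℓ(v)`: the `2k+1` vertices `u 0 = v, u 1, …, u k,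
u' 1, …, u' k` are all distinct and there exist `0 ≤ i, j ≤ k-1` such that the pair
`(u ℓ, u' ℓ)` is `(i,j)`-rich (symmetrised so that this defines a graph). -/
def AuxAdj (G : SimpleGraph V) (k h : ℕ) (K δ : ℝ) (ℓ : Fin (k + 1))
    (u u' : Fin (k + 1) → V) : Prop :=
  Function.Injective u ∧ Function.Injective u' ∧
  (∀ a b : Fin (k + 1), a ≠ 0 → b ≠ 0 → u a ≠ u' b) ∧
  ∃ i j : ℕ, i < k ∧ j < k ∧
    (Rich G k h K δ i j (u ℓ) (u' ℓ) ∨ Rich G k h K δ i j (u' ℓ) (u ℓ))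

/-- `r` satisfies the `k`-colour Ramsey property for `t`: every `k`-colouring of the edges of
the complete graph on `r` vertices contains a monochromatic complete graph on `t` vertices. -/
def RamseyProp (k t r : ℕ) : Prop :=
  ∀ χ : Fin r → Fin r → Fin k, (∀ a b, χ a b = χ b a) →
    ∃ (col : Fin k) (s : Finset (Fin r)), s.card = t ∧
      ∀ a ∈ s, ∀ b ∈ s, a ≠ b → χ a b = col


lemma pathSeq_congr {G : SimpleGraph V} {m : ℕ} {r r' : ℕ → V}
    (he : ∀ a, a ≤ m → r a = r' a) (h : PathSeq G m r) : PathSeq G m r' := by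
  obtain ⟨h1, h2⟩ := h
  constructor
  · intro i hi
    rw [← he i (by omega), ← he (i + 1) (by omega)]
    exact h1 i hi
  · intro i j hij hj
    rw [← he i (by omega), ← he j hj]
    exact h2 i j hij hj

lemma good_congr {G : SimpleGraph V} {L : ℝ} :
    ∀ m (r r' : ℕ → V), (∀ a, a ≤ m → r a = r' a) → Good G L m r → Good G L m r' := by
  intro m
  induction m using Nat.strong_induction_on with
  | _ m ih =>
    intro r r' he hg
    rw [Good.eq_def] at hg ⊢
    obtain ⟨⟨hp, hs⟩, hc⟩ := hg
    refine ⟨⟨pathSeq_congr he hp, ?_⟩, ?_⟩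
    · intro i j hij hjm hne
      exact ih (j - i) (by omega) _ _ (fun a ha => he (i + a) (by omega)) (hs i j hij hjm hne)
    · have h0 : r 0 = r' 0 := he 0 (Nat.zero_le _)
      have hm : r m = r' m := he m le_rfl
      rw [← h0, ← hm]
      exact hc

lemma good_iff {G : SimpleGraph V} {L : ℝ} {m : ℕ} {r : ℕ → V} :
    Good G L m r ↔ (Admissible G L m r ∧
      (Set.ncard {q : ℕ → V | q 0 = r 0 ∧ q m = r m ∧ PadSeq m q ∧ Admissible G L m q} : ℝ)
        ≤ fBound m L) := by
  rw [Good.eq_def]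
  have hset : {q : ℕ → V | q 0 = r 0 ∧ q m = r m ∧ PadSeq m q ∧ Admissible G L m q}
      = {q : ℕ → V | q 0 = r 0 ∧ q m = r m ∧ PadSeq m q ∧ PathSeq G m q ∧
          ∀ i j, i < j → j ≤ m → ¬(i = 0 ∧ j = m) → Good G L (j - i) (fun a => q (i + a))} := by
    ext q
    simp only [Set.mem_setOf_eq, Admissible, and_assoc]
  rw [hset]
  rfl

lemma padseq_finite {m : ℕ} {S : Set (ℕ → V)} (h : ∀ q ∈ S, PadSeq m q) : S.Finite := by
  have hsub : S ⊆ Set.range (fun f : Fin (m + 1) → V => fun n => f ⟨min n m, by omega⟩) := by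
    intro q hq
    refine ⟨fun a => q a, funext fun n => ?_⟩
    simp only
    rcases le_or_gt n m with hn | hn
    · rw [min_eq_left hn]
    · rw [min_eq_right hn.le]
      exact (h q hq n hn.le).symm
  exact (Set.finite_range _).subset hsub

set_option linter.unusedSectionVars false

lemma fBound_pos {m : ℕ} {L : ℝ} (hL : 0 < L) : 0 < fBound m L := by
  unfold fBound; positivity

lemma mid_count (G : SimpleGraph V) {L : ℝ} (hL : 0 < L) (ℓ i : ℕ)
    (hi0 : 0 < i) (hiℓ : i < ℓ) (x y v : V) :
    ((Set.ncard {q : ℕ → V | q 0 = x ∧ q ℓ = y ∧ PadSeq ℓ q ∧ Admissible G L ℓ q ∧ q i = v}) : ℝ)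
      ≤ fBound i L * fBound (ℓ - i) L := by
  set S : Set (ℕ → V) :=
    {q : ℕ → V | q 0 = x ∧ q ℓ = y ∧ PadSeq ℓ q ∧ Admissible G L ℓ q ∧ q i = v} with hSdef
  rcases S.eq_empty_or_nonempty with hSe | ⟨q0, hq0⟩
  · rw [hSe, Set.ncard_empty]
    have := mul_pos (fBound_pos (m := i) hL) (fBound_pos (m := ℓ - i) hL)
    push_cast; linarith
  · obtain ⟨hx0, hy0, hpad0, hadm0, hv0⟩ := hq0
    set A : Set (ℕ → V) :=
      {r : ℕ → V | r 0 = x ∧ r i = v ∧ PadSeq i r ∧ Admissible G L i r} with hAdef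
    set B : Set (ℕ → V) :=
      {r : ℕ → V | r 0 = v ∧ r (ℓ - i) = y ∧ PadSeq (ℓ - i) r ∧ Admissible G L (ℓ - i) r} with hBdef
    -- bound on |A|
    have hgA : Good G L i (fun a => q0 (0 + a)) := hadm0.2 0 i hi0 hiℓ.le (by omega)
    have hgA' : Good G L i q0 := good_congr i _ q0 (fun a _ => by simp) hgA
    have hAcard : (A.ncard : ℝ) ≤ fBound i L := by
      have := (good_iff.mp hgA').2
      rw [hx0, hv0] at this
      exact this
    have hgB : Good G L (ℓ - i) (fun a => q0 (i + a)) := hadm0.2 i ℓ hiℓ le_rfl (by omega)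
    have hBcard : (B.ncard : ℝ) ≤ fBound (ℓ - i) L := by
      have := (good_iff.mp hgB).2
      simp only [Nat.add_zero] at this
      have hiℓ' : i + (ℓ - i) = ℓ := by omega
      rw [hiℓ', hv0, hy0] at this
      exact this
    have hAfin : A.Finite := padseq_finite (fun q hq => hq.2.2.1)
    have hBfin : B.Finite := padseq_finite (fun q hq => hq.2.2.1)
    -- the injection
    set F : (ℕ → V) → (ℕ → V) × (ℕ → V) :=
      fun q => (fun a => q (min a i), fun a => q (i + min a (ℓ - i))) with hFdef
    have hmaps : ∀ q ∈ S, F q ∈ A ×ˢ B := by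
      rintro q ⟨hqx, hqy, hqpad, hqadm, hqv⟩
      constructor
      · refine ⟨by simpa [hFdef] using hqx, by simpa [hFdef] using hqv, ?_, ?_⟩
        · intro a ha
          simp only [hFdef, min_self, min_eq_right ha]
        · have hg : Good G L i (fun a => q (0 + a)) := hqadm.2 0 i hi0 hiℓ.le (by omega)
          have hg' : Good G L i (fun a => q (min a i)) :=
            good_congr i _ _ (fun a ha => by simp [min_eq_left ha]) hg
          exact (good_iff.mp hg').1
      · refine ⟨by simpa [hFdef] using hqv, ?_, ?_, ?_⟩
        · have : i + min (ℓ - i) (ℓ - i) = ℓ := by omega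
          simp only [hFdef, min_self]
          rw [show i + (ℓ - i) = ℓ by omega, hqy]
        · intro a ha
          simp only [hFdef, min_self, min_eq_right ha]
        · have hg : Good G L (ℓ - i) (fun a => q (i + a)) := hqadm.2 i ℓ hiℓ le_rfl (by omega)
          have hg' : Good G L (ℓ - i) (fun a => q (i + min a (ℓ - i))) :=
            good_congr _ _ _ (fun a ha => by simp [min_eq_left ha]) hg
          exact (good_iff.mp hg').1
    have hinj : Set.InjOn F S := by
      rintro q hq q' hq' hFeq
      have h1 : ∀ a, a ≤ i → q a = q' a := by
        intro a ha
        have := congrFun (congrArg Prod.fst hFeq) a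
        simpa [hFdef, min_eq_left ha] using this
      have h2 : ∀ a, a ≤ ℓ - i → q (i + a) = q' (i + a) := by
        intro a ha
        have := congrFun (congrArg Prod.snd hFeq) a
        simpa [hFdef, min_eq_left ha] using this
      funext n
      rcases le_or_gt n ℓ with hn | hn
      · rcases le_or_gt n i with hni | hni
        · exact h1 n hni
        · have := h2 (n - i) (by omega)
          rwa [show i + (n - i) = n by omega] at this
      · rw [hq.2.2.1 n hn.le, hq'.2.2.1 n hn.le]
        have := h2 (ℓ - i) le_rfl
        rwa [show i + (ℓ - i) = ℓ by omega] at this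
    -- cardinality chain
    have hABfin : (A ×ˢ B).Finite := hAfin.prod hBfin
    have hcard1 : S.ncard = (F '' S).ncard := (Set.ncard_image_of_injOn hinj).symm
    have hcard2 : (F '' S).ncard ≤ (A ×ˢ B).ncard :=
      Set.ncard_le_ncard (Set.image_subset_iff.mpr hmaps) hABfin
    have hcard3 : (A ×ˢ B).ncard = A.ncard * B.ncard := by
      rw [← Nat.card_coe_set_eq, ← Nat.card_coe_set_eq, ← Nat.card_coe_set_eq,
        Nat.card_congr (Equiv.Set.prod A B), Nat.card_prod]
    have : (S.ncard : ℝ) ≤ (A.ncard : ℝ) * (B.ncard : ℝ) := by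
      rw [hcard1]
      calc ((F '' S).ncard : ℝ) ≤ ((A ×ˢ B).ncard : ℝ) := by exact_mod_cast hcard2
        _ = (A.ncard : ℝ) * B.ncard := by rw [hcard3]; push_cast; ring
    calc (S.ncard : ℝ) ≤ (A.ncard : ℝ) * (B.ncard : ℝ) := this
      _ ≤ fBound i L * fBound (ℓ - i) L := by
        apply mul_le_mul hAcard hBcard (by positivity) (le_trans (by positivity) hAcard)

/-- **Lemma 2.3.** Let `ℓ ≥ 2` and `L > ℓ`. If a path `p 0 … p ℓ` is
`L`-admissible but not `L`-good, then there exist at least `L` pairwise internally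
vertex-disjoint paths of length `ℓ` from `p 0` to `p ℓ`. -/
theorem many_disjoint_paths_of_admissible_not_good
    {V : Type*} [Fintype V] [DecidableEq V] (G : SimpleGraph V)
    (ℓ : ℕ) (hℓ : 2 ≤ ℓ) (L : ℝ) (hL : (ℓ : ℝ) < L)
    (p : ℕ → V) (hadm : Admissible G L ℓ p) (hgood : ¬ Good G L ℓ p) :
    ∃ N : ℕ, L ≤ (N : ℝ) ∧ ManyDisjointPaths G ℓ (p 0) (p ℓ) N := by
  classical
  have hL0 : (0 : ℝ) < L := lt_of_le_of_lt (by positivity) hL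
  have hL1 : (1 : ℝ) ≤ L := by
    have : (2 : ℝ) ≤ (ℓ : ℝ) := by exact_mod_cast hℓ
    linarith
  set S : Set (ℕ → V) := {q : ℕ → V | q 0 = p 0 ∧ q ℓ = p ℓ ∧ PadSeq ℓ q ∧ Admissible G L ℓ q}
    with hSdef
  have hSfin : S.Finite := padseq_finite (fun q hq => hq.2.2.1)
  have hcard : fBound ℓ L < (S.ncard : ℝ) := by
    by_contra h
    push_neg at h
    exact hgood (good_iff.mpr ⟨hadm, h⟩)
  set Sf : Finset (ℕ → V) := hSfin.toFinset with hSfdef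
  have hSfS : ∀ q, q ∈ Sf ↔ q ∈ S := fun q => hSfin.mem_toFinset
  have hSfcard : Sf.card = S.ncard := (Set.ncard_eq_toFinset_card S hSfin).symm
  -- maximal internally disjoint family
  set Dis : Finset (ℕ → V) → Prop := fun D => ↑D ⊆ S ∧
      ∀ q ∈ D, ∀ q' ∈ D, q ≠ q' →
        ∀ i j, 0 < i → i < ℓ → 0 < j → j < ℓ → q i ≠ q' j with hDisdef
  obtain ⟨D, hD, hDmax⟩ : ∃ D, Dis D ∧ ∀ D', Dis D' → D'.card ≤ D.card := by
    obtain ⟨D, hDmem, hmax⟩ := Finset.exists_max_image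
      (Sf.powerset.filter (fun D => Dis D)) Finset.card
      ⟨∅, by simp [hDisdef]⟩
    rw [Finset.mem_filter] at hDmem
    refine ⟨D, hDmem.2, fun D' hD' => hmax D' ?_⟩
    rw [Finset.mem_filter, Finset.mem_powerset]
    refine ⟨fun q hq => (hSfS q).mpr (hD'.1 hq), hD'⟩
  by_cases hbig : L ≤ (D.card : ℝ)
  · refine ⟨D.card, hbig, fun a => (D.equivFin.symm a : ℕ → V), ?_, ?_, ?_⟩
    · intro a
      have hmem : ↑(D.equivFin.symm a) ∈ S := hD.1 (D.equivFin.symm a).2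
      exact ⟨hmem.2.2.2.1, hmem.1, hmem.2.1⟩
    · intro a b hab
      have hne : (D.equivFin.symm a : ℕ → V) ≠ (D.equivFin.symm b : ℕ → V) := by
        intro h
        exact hab (D.equivFin.symm.injective (Subtype.ext h))
      by_contra hall
      push_neg at hall
      apply hne
      funext n
      rcases le_or_gt n ℓ with hn | hn
      · exact hall n hn
      · have h1 : ↑(D.equivFin.symm a) ∈ S := hD.1 (D.equivFin.symm a).2
        have h2 : ↑(D.equivFin.symm b) ∈ S := hD.1 (D.equivFin.symm b).2
        rw [h1.2.2.1 n hn.le, h2.2.2.1 n hn.le]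
        exact hall ℓ le_rfl
    · intro a b hab i j hi0 hiℓ' hj0 hjℓ'
      have hne : (D.equivFin.symm a : ℕ → V) ≠ (D.equivFin.symm b : ℕ → V) := by
        intro h
        exact hab (D.equivFin.symm.injective (Subtype.ext h))
      exact hD.2 _ (D.equivFin.symm a).2 _ (D.equivFin.symm b).2 hne i j hi0 hiℓ' hj0 hjℓ'
  · exfalso
    push_neg at hbig
    have hSne : S.Nonempty := by
      rw [Set.nonempty_iff_ne_empty]
      intro h
      rw [h, Set.ncard_empty] at hcard
      have := fBound_pos (m := ℓ) hL0
      norm_num at hcard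
      linarith
    obtain ⟨q0, hq0S⟩ := hSne
    haveI : Nonempty (ℕ → V) := ⟨q0⟩
    set T : Finset ((ℕ → V) × ℕ × ℕ) := D ×ˢ (Finset.Ioo 0 ℓ ×ˢ Finset.Ioo 0 ℓ) with hTdef
    have hmeet : ∀ q ∈ S, ∃ t ∈ T, q t.2.1 = t.1 t.2.2 := by
      intro q hq
      by_contra hnone
      push_neg at hnone
      have hnone' : ∀ d ∈ D, ∀ i j, 0 < i → i < ℓ → 0 < j → j < ℓ → q i ≠ d j := by
        intro d hd i j hi0 hiℓ' hj0 hjℓ'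
        exact hnone (d, i, j) (by simp [hTdef, Finset.mem_product, hd, hi0, hiℓ', hj0, hjℓ'])
      have hqD : q ∉ D := by
        intro h
        exact hnone' q h 1 1 one_pos (by omega) one_pos (by omega) rfl
      have hDis : Dis (insert q D) := by
        constructor
        · intro r hr
          rw [Finset.coe_insert, Set.mem_insert_iff] at hr
          rcases hr with rfl | hr
          · exact hq
          · exact hD.1 hr
        · intro r hr r' hr' hne i j hi0 hiℓ' hj0 hjℓ'
          rw [Finset.mem_insert] at hr hr'
          rcases hr with rfl | hr <;> rcases hr' with rfl | hr'
          · exact absurd rfl hne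
          · exact hnone' r' hr' i j hi0 hiℓ' hj0 hjℓ'
          · exact (hnone' r hr j i hj0 hjℓ' hi0 hiℓ').symm
          · exact hD.2 r hr r' hr' hne i j hi0 hiℓ' hj0 hjℓ'
      have := hDmax _ hDis
      rw [Finset.card_insert_of_notMem hqD] at this
      omega
    set g : (ℕ → V) → ((ℕ → V) × ℕ × ℕ) := fun q =>
      if h : ∃ t ∈ T, q t.2.1 = t.1 t.2.2 then h.choose else Classical.arbitrary _
      with hgdef
    have hg : ∀ q ∈ Sf, g q ∈ T := by
      intro q hq
      have h := hmeet q ((hSfS q).mp hq)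
      simp only [hgdef, dif_pos h]
      exact h.choose_spec.1
    have hgspec : ∀ q ∈ Sf, q (g q).2.1 = (g q).1 (g q).2.2 := by
      intro q hq
      have h := hmeet q ((hSfS q).mp hq)
      simp only [hgdef, dif_pos h]
      exact h.choose_spec.2
    have hfib : ∀ t ∈ T, ((Sf.filter (fun q => g q = t)).card : ℝ) ≤ L ^ (2 * 5 ^ (ℓ - 1)) := by
      rintro ⟨d, i, j⟩ ht
      simp only [hTdef, Finset.mem_product, Finset.mem_Ioo] at ht
      obtain ⟨hd, ⟨hi0, hiℓ'⟩, hj0, hjℓ'⟩ := ht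
      set M : Set (ℕ → V) :=
        {q : ℕ → V | q 0 = p 0 ∧ q ℓ = p ℓ ∧ PadSeq ℓ q ∧ Admissible G L ℓ q ∧ q i = d j}
        with hMdef
      have hMfin : M.Finite := padseq_finite (fun q hq => hq.2.2.1)
      have hsub : ↑(Sf.filter (fun q => g q = (d, i, j))) ⊆ M := by
        intro q hq
        rw [Finset.coe_filter, Set.mem_setOf_eq] at hq
        obtain ⟨hqSf, hgq⟩ := hq
        have hqS := (hSfS q).mp hqSf
        have := hgspec q hqSf
        rw [hgq] at this
        exact ⟨hqS.1, hqS.2.1, hqS.2.2.1, hqS.2.2.2, this⟩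
      have h1 : ((Sf.filter (fun q => g q = (d, i, j))).card : ℕ) ≤ M.ncard := by
        rw [← Set.ncard_coe_finset]
        exact Set.ncard_le_ncard hsub hMfin
      have h2 : (M.ncard : ℝ) ≤ fBound i L * fBound (ℓ - i) L :=
        mid_count G hL0 ℓ i hi0 hiℓ' (p 0) (p ℓ) (d j)
      have h3 : fBound i L * fBound (ℓ - i) L ≤ L ^ (2 * 5 ^ (ℓ - 1)) := by
        unfold fBound
        rw [← pow_add]
        apply pow_le_pow_right₀ hL1
        have e1 : 5 ^ i ≤ 5 ^ (ℓ - 1) := Nat.pow_le_pow_right (by norm_num) (by omega)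
        have e2 : 5 ^ (ℓ - i) ≤ 5 ^ (ℓ - 1) := Nat.pow_le_pow_right (by norm_num) (by omega)
        omega
      calc ((Sf.filter (fun q => g q = (d, i, j))).card : ℝ) ≤ (M.ncard : ℝ) := by
            exact_mod_cast h1
        _ ≤ fBound i L * fBound (ℓ - i) L := h2
        _ ≤ L ^ (2 * 5 ^ (ℓ - 1)) := h3
    have hsum : (Sf.card : ℝ) ≤ (T.card : ℝ) * L ^ (2 * 5 ^ (ℓ - 1)) := by
      rw [Finset.card_eq_sum_card_fiberwise hg]
      push_cast
      calc (∑ t ∈ T, ((Sf.filter (fun q => g q = t)).card : ℝ))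
          ≤ ∑ _t ∈ T, L ^ (2 * 5 ^ (ℓ - 1)) := Finset.sum_le_sum hfib
        _ = (T.card : ℝ) * L ^ (2 * 5 ^ (ℓ - 1)) := by rw [Finset.sum_const, nsmul_eq_mul]
    have hTcard : (T.card : ℝ) < L ^ 3 := by
      have : T.card = D.card * ((ℓ - 1) * (ℓ - 1)) := by
        simp [hTdef, Finset.card_product, Nat.card_Ioo]
      rw [this]
      push_cast
      have hℓ1 : ((ℓ - 1 : ℕ) : ℝ) < L := by
        have : ((ℓ - 1 : ℕ) : ℝ) ≤ (ℓ : ℝ) := by exact_mod_cast Nat.sub_le ℓ 1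
        linarith
      have hD0 : (0 : ℝ) ≤ (D.card : ℝ) := Nat.cast_nonneg _
      have hℓ10 : (0 : ℝ) ≤ ((ℓ - 1 : ℕ) : ℝ) := Nat.cast_nonneg _
      calc (D.card : ℝ) * (((ℓ - 1 : ℕ) : ℝ) * ((ℓ - 1 : ℕ) : ℝ)) < L * (L * L) :=
            mul_lt_mul'' hbig (mul_lt_mul'' hℓ1 hℓ1 hℓ10 hℓ10) hD0 (mul_nonneg hℓ10 hℓ10)
        _ = L ^ 3 := by ring
    have hfinal : (Sf.card : ℝ) < fBound ℓ L := by
      calc (Sf.card : ℝ) ≤ (T.card : ℝ) * L ^ (2 * 5 ^ (ℓ - 1)) := hsum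
        _ < L ^ 3 * L ^ (2 * 5 ^ (ℓ - 1)) := by
            apply mul_lt_mul_of_pos_right hTcard (by positivity)
        _ = L ^ (3 + 2 * 5 ^ (ℓ - 1)) := by rw [pow_add]
        _ ≤ L ^ (5 ^ ℓ) := by
            apply pow_le_pow_right₀ hL1
            have h5 : 5 ^ ℓ = 5 * 5 ^ (ℓ - 1) := by
              conv_lhs => rw [show ℓ = (ℓ - 1) + 1 by omega]
              rw [pow_succ]
              ring
            have : 1 ≤ 5 ^ (ℓ - 1) := Nat.one_le_pow _ _ (by norm_num)
            omega
        _ = fBound ℓ L := rfl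
    rw [hSfcard] at hfinal
    linarith
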